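/- For each θ ∈ (0,1) there is a constant C_θ depending only on θ such that every continuous function f : 𝔸 → ℂ on the closed annulus 𝔸 = {z ∈ ℂ : 1 ≤ |z| ≤ e} which is analytic in the interior of 𝔸 satisfies |f(e^θ)| ≤ C_θ · ( ∫₀^{2π} |f(e^{it})| dt )^{1−θ} · ( ∫₀^{2π} |f(e^{1+it})| dt )^{θ}. -/

import Mathlib

open MeasureTheory Complex Filter Set
noncomputable section

/-- The closed annulus `𝔸 = {z : 1 ≤ |z| ≤ e}`. -/
def Ann : Set ℂ := {z | 1 ≤ ‖z‖ ∧ ‖z‖ ≤ Real.exp 1}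

/-- The interior of the annulus, `{z : 1 < |z| < e}`. -/
def AnnInt : Set ℂ := {z | 1 < ‖z‖ ∧ ‖z‖ < Real.exp 1}

open Topology

lemma stmt10_annEq : Metric.closedBall (0:ℂ) (Real.exp 1) \ Metric.ball 0 1 = Ann := by
  ext z
  simp [Ann, Complex.dist_eq, and_comm, not_lt]

lemma stmt10_annIntEq : Metric.ball (0:ℂ) (Real.exp 1) \ Metric.closedBall 0 1 = AnnInt := by
  ext z
  simp [AnnInt, Complex.dist_eq, and_comm, not_le]

lemma stmt10_annInt_open : IsOpen AnnInt := by
  rw [← stmt10_annIntEq]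
  exact Metric.isOpen_ball.sdiff Metric.isClosed_closedBall

lemma stmt10_circles_eq (g : ℂ → ℂ) (s : Set ℂ) (hs : s.Countable)
    (hc : ContinuousOn g Ann)
    (hd : ∀ z ∈ AnnInt \ s, DifferentiableAt ℂ g z) :
    (∮ w in C(0, Real.exp 1), g w) = ∮ w in C(0, 1), g w := by
  refine circleIntegral_eq_of_differentiable_on_annulus_off_countable one_pos
    (Real.one_le_exp one_pos.le) hs ?_ ?_
  · rw [stmt10_annEq]; exact hc
  · intro z hz
    exact hd z ⟨stmt10_annIntEq ▸ hz.1, hz.2⟩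

lemma stmt10_norm_cint_le (g : ℂ → ℂ) {ρ : ℝ} (hρ : 0 ≤ ρ) :
    ‖∮ w in C(0, ρ), g w‖ ≤
      ρ * ∫ t in (0:ℝ)..(2 * Real.pi), ‖g (circleMap 0 ρ t)‖ := by
  have h1 : ‖∮ w in C(0, ρ), g w‖ ≤
      ∫ t in (0:ℝ)..(2 * Real.pi), ‖deriv (circleMap 0 ρ) t • g (circleMap 0 ρ t)‖ := by
    rw [circleIntegral]
    simpa using
      intervalIntegral.norm_integral_le_integral_norm (a := (0:ℝ)) (b := 2 * Real.pi)
        (f := fun t => deriv (circleMap 0 ρ) t • g (circleMap 0 ρ t)) (by positivity)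
  have h2 : (∫ t in (0:ℝ)..(2 * Real.pi), ‖deriv (circleMap 0 ρ) t • g (circleMap 0 ρ t)‖)
      = ρ * ∫ t in (0:ℝ)..(2 * Real.pi), ‖g (circleMap 0 ρ t)‖ := by
    rw [← intervalIntegral.integral_const_mul ρ (fun t => ‖g (circleMap 0 ρ t)‖)]
    refine intervalIntegral.integral_congr fun t _ => ?_
    simp only [deriv_circleMap, norm_mul, norm_circleMap_zero,
      Complex.norm_I, mul_one, _root_.abs_of_nonneg hρ, smul_eq_mul]
  rw [← h2]; exact h1

lemma stmt10_cint_add {f g : ℂ → ℂ} {c : ℂ} {ρ : ℝ} (hf : CircleIntegrable f c ρ)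
    (hg : CircleIntegrable g c ρ) :
    (∮ w in C(c, ρ), (f w + g w)) = (∮ w in C(c, ρ), f w) + ∮ w in C(c, ρ), g w := by
  simp only [circleIntegral, smul_add]
  exact intervalIntegral.integral_add hf.out hg.out

lemma stmt10_geom (c : ℝ) (hc : 0 < c) (m : ℕ) :
    ∑ k ∈ Finset.range m, Real.exp (-c) ^ k ≤ (1 - Real.exp (-c))⁻¹ := by
  have h0 : (0:ℝ) ≤ Real.exp (-c) := (Real.exp_pos _).le
  have h1 : Real.exp (-c) < 1 := by
    rw [Real.exp_lt_one_iff]; linarith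
  exact le_trans (Summable.sum_le_tsum _ (fun k _ => by positivity)
    (summable_geometric_of_lt_one h0 h1)) (tsum_geometric_of_lt_one h0 h1).le

lemma stmt10_sum_exp_le (c t : ℝ) (hc : 0 < c) (N : ℕ) :
    ∑ n ∈ Finset.range N, Real.exp (-(c * |(n : ℝ) - t|)) ≤ 2 * (1 - Real.exp (-c))⁻¹ := by
  set r := Real.exp (-c) with hr
  have hrk : ∀ k : ℕ, Real.exp (-(c * (k : ℝ))) = r ^ k := by
    intro k
    rw [hr, ← Real.exp_nat_mul]
    ring_nf
  set M := (⌈t⌉).toNat with hM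
  set K := max N M with hK
  have step1 : ∑ n ∈ Finset.range N, Real.exp (-(c * |(n : ℝ) - t|)) ≤
      ∑ n ∈ Finset.range K, Real.exp (-(c * |(n : ℝ) - t|)) := by
    apply Finset.sum_le_sum_of_subset_of_nonneg
    · exact Finset.range_subset_range.2 (le_max_left _ _)
    · intro i _ _; exact (Real.exp_pos _).le
  have split : ∑ n ∈ Finset.range K, Real.exp (-(c * |(n : ℝ) - t|)) =
      (∑ n ∈ Finset.range M, Real.exp (-(c * |(n : ℝ) - t|))) +
      ∑ n ∈ Finset.Ico M K, Real.exp (-(c * |(n : ℝ) - t|)) := by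
    rw [Finset.range_eq_Ico, Finset.range_eq_Ico]
    exact (Finset.sum_Ico_consecutive _ (Nat.zero_le M) (le_max_right N M)).symm
  have hMle : ∀ n : ℕ, n < M → ((M:ℝ) - 1 - n) ≤ |(n : ℝ) - t| := by
    intro n hn
    have hceil : 0 < ⌈t⌉ := by
      rcases le_or_gt ⌈t⌉ 0 with h | h
      · exfalso
        have : M = 0 := by rw [hM, Int.toNat_eq_zero]; exact h
        omega
      · exact h
    have hMZ : (M : ℤ) = ⌈t⌉ := Int.toNat_of_nonneg hceil.le
    have hMt : (M:ℝ) - 1 < t := by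
      have h2 : ((⌈t⌉ : ℤ) : ℝ) < t + 1 := by exact_mod_cast Int.ceil_lt_add_one t
      have h3 : ((M : ℤ) : ℝ) = ((⌈t⌉ : ℤ) : ℝ) := by rw [hMZ]
      push_cast at h3 ⊢
      linarith
    have hn' : (n:ℝ) ≤ (M:ℝ) - 1 := by
      have : (n:ℝ) + 1 ≤ M := by exact_mod_cast hn
      linarith
    rw [abs_sub_comm, _root_.abs_of_pos (by linarith)]
    linarith
  have htM : t ≤ (M:ℝ) := by
    have h1 : (⌈t⌉ : ℤ) ≤ (M : ℤ) := Int.self_le_toNat _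
    have h2 : t ≤ ((⌈t⌉ : ℤ) : ℝ) := Int.le_ceil t
    have h3 : ((⌈t⌉ : ℤ) : ℝ) ≤ ((M:ℤ):ℝ) := by exact_mod_cast h1
    push_cast at h3
    linarith
  have bound1 : (∑ n ∈ Finset.range M, Real.exp (-(c * |(n : ℝ) - t|))) ≤ (1 - r)⁻¹ := by
    have hterm : ∀ n ∈ Finset.range M, Real.exp (-(c * |(n : ℝ) - t|)) ≤ r ^ (M - 1 - n) := by
      intro n hn
      rw [Finset.mem_range] at hn
      have h := hMle n hn
      have hcast : ((M - 1 - n : ℕ) : ℝ) = (M:ℝ) - 1 - n := by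
        rw [Nat.cast_sub (by omega), Nat.cast_sub (by omega)]
        norm_num
      rw [← hrk (M - 1 - n)]
      apply Real.exp_le_exp.2
      rw [hcast]
      nlinarith [abs_nonneg ((n:ℝ) - t)]
    calc (∑ n ∈ Finset.range M, Real.exp (-(c * |(n : ℝ) - t|)))
        ≤ ∑ n ∈ Finset.range M, r ^ (M - 1 - n) := Finset.sum_le_sum hterm
      _ = ∑ k ∈ Finset.range M, r ^ k := Finset.sum_range_reflect (fun k => r ^ k) M
      _ ≤ (1 - r)⁻¹ := stmt10_geom c hc M
  have bound2 : (∑ n ∈ Finset.Ico M K, Real.exp (-(c * |(n : ℝ) - t|))) ≤ (1 - r)⁻¹ := by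
    have hterm : ∀ n ∈ Finset.Ico M K, Real.exp (-(c * |(n : ℝ) - t|)) ≤ r ^ (n - M) := by
      intro n hn
      rw [Finset.mem_Ico] at hn
      have hMn : (M:ℝ) ≤ n := by exact_mod_cast hn.1
      have habs : (n:ℝ) - M ≤ |(n:ℝ) - t| := le_trans (by linarith) (le_abs_self _)
      have hcast : ((n - M : ℕ) : ℝ) = (n:ℝ) - M := by
        rw [Nat.cast_sub hn.1]
      rw [← hrk (n - M)]
      apply Real.exp_le_exp.2
      rw [hcast]
      nlinarith [abs_nonneg ((n:ℝ) - t)]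
    calc (∑ n ∈ Finset.Ico M K, Real.exp (-(c * |(n : ℝ) - t|)))
        ≤ ∑ n ∈ Finset.Ico M K, r ^ (n - M) := Finset.sum_le_sum hterm
      _ = ∑ i ∈ Finset.range (K - M), r ^ (M + i - M) := Finset.sum_Ico_eq_sum_range _ _ _
      _ = ∑ i ∈ Finset.range (K - M), r ^ i := by
          apply Finset.sum_congr rfl
          intro i _
          congr 1
          omega
      _ ≤ (1 - r)⁻¹ := stmt10_geom c hc _
  linarith

lemma stmt10_minbound {θ : ℝ} (hθ0 : 0 < θ) (hθ1 : θ < 1) {I₀ I₁ : ℝ}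
    (h0 : 0 ≤ I₀) (h1 : 0 ≤ I₁) (x : ℝ) :
    min (Real.exp (θ * x) * I₀) (Real.exp ((θ - 1) * x) * I₁) ≤
      I₀ ^ (1 - θ) * I₁ ^ θ *
        Real.exp (-(min θ (1 - θ) * |x - (Real.log I₁ - Real.log I₀)|)) := by
  set c := min θ (1 - θ) with hc
  rcases eq_or_lt_of_le h0 with h0' | h0'
  · have hle : min (Real.exp (θ * x) * I₀) (Real.exp ((θ - 1) * x) * I₁) ≤ 0 := by
      refine le_trans (min_le_left _ _) ?_
      rw [← h0']; simp
    refine le_trans hle ?_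
    have hz : I₀ ^ (1 - θ) = 0 := by
      rw [← h0', Real.zero_rpow (by linarith)]
    rw [hz]
    simp
  rcases eq_or_lt_of_le h1 with h1' | h1'
  · have hle : min (Real.exp (θ * x) * I₀) (Real.exp ((θ - 1) * x) * I₁) ≤ 0 := by
      refine le_trans (min_le_right _ _) ?_
      rw [← h1']; simp
    refine le_trans hle ?_
    have hz : I₁ ^ θ = 0 := by
      rw [← h1', Real.zero_rpow (by linarith)]
    rw [hz]
    simp
  obtain ⟨u, rfl⟩ : ∃ u, I₀ = Real.exp u := ⟨Real.log I₀, (Real.exp_log h0').symm⟩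
  obtain ⟨v, rfl⟩ : ∃ v, I₁ = Real.exp v := ⟨Real.log I₁, (Real.exp_log h1').symm⟩
  rw [Real.log_exp, Real.log_exp, ← Real.exp_mul, ← Real.exp_mul,
    ← Real.exp_add, ← Real.exp_add, ← Real.exp_add, ← Real.exp_add]
  have hcθ : c ≤ θ := min_le_left _ _
  have hcθ' : c ≤ 1 - θ := min_le_right _ _
  rcases le_total x (v - u) with hx | hx
  · refine le_trans (min_le_left _ _) (Real.exp_le_exp.2 ?_)
    rw [_root_.abs_of_nonpos (by linarith)]
    nlinarith [mul_nonneg (sub_nonneg.2 hcθ) (sub_nonneg.2 hx)]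
  · refine le_trans (min_le_right _ _) (Real.exp_le_exp.2 ?_)
    rw [_root_.abs_of_nonneg (by linarith)]
    nlinarith [mul_nonneg (sub_nonneg.2 hcθ') (sub_nonneg.2 hx)]

lemma stmt10_expandOut (N : ℕ) (w z fw : ℂ) (hw : w ≠ 0) (hwz : w ≠ z) :
    (z * w⁻¹) ^ N * ((w - z)⁻¹ * fw) =
      z ^ N * ((w⁻¹) ^ (N + 1) * fw) + (z * w⁻¹) ^ (N + 1) * ((w - z)⁻¹ * fw) := by
  have hsub : w - z ≠ 0 := sub_ne_zero.2 hwz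
  linear_combination (-(z ^ N * w⁻¹ ^ N * fw * (w - z)⁻¹)) * mul_inv_cancel₀ hw +
    (z ^ N * w⁻¹ ^ N * fw * w⁻¹) * mul_inv_cancel₀ hsub

lemma stmt10_expandIn (N : ℕ) (w z fw : ℂ) (hz : z ≠ 0) (hwz : w ≠ z) :
    (w * z⁻¹) ^ N * ((w - z)⁻¹ * fw) =
      (-(z⁻¹) ^ (N + 1)) * (w ^ N * fw) + (w * z⁻¹) ^ (N + 1) * ((w - z)⁻¹ * fw) := by
  have hsub : w - z ≠ 0 := sub_ne_zero.2 hwz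
  linear_combination (-(w ^ N * z⁻¹ ^ N * fw * (w - z)⁻¹)) * mul_inv_cancel₀ hz +
    (-(w ^ N * z⁻¹ ^ N * fw * z⁻¹)) * mul_inv_cancel₀ hsub

/-- **Statement 10.**  For each `θ ∈ (0,1)` there is a constant `C_θ` depending only on `θ`
such that every continuous function `f : 𝔸 → ℂ`, analytic in the interior of `𝔸`, satisfies
`|f(e^θ)| ≤ C_θ (∫₀^{2π} |f(e^{it})| dt)^{1-θ} (∫₀^{2π} |f(e^{1+it})| dt)^{θ}`. -/
theorem stmt10 :
    ∀ θ ∈ Set.Ioo (0 : ℝ) 1, ∃ C : ℝ, ∀ f : ℂ → ℂ,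
      ContinuousOn f Ann → DifferentiableOn ℂ f AnnInt →
      ‖f (Real.exp θ)‖ ≤
        C * (∫ t in (0:ℝ)..(2 * Real.pi),
              ‖f (Complex.exp (t * Complex.I))‖) ^ (1 - θ)
          * (∫ t in (0:ℝ)..(2 * Real.pi),
              ‖f (Complex.exp (1 + t * Complex.I))‖) ^ θ := by
  rintro θ ⟨hθ0, hθ1⟩
  have hc : 0 < min θ (1 - θ) := lt_min hθ0 (by linarith)
  refine ⟨4 * (1 - Real.exp (-(min θ (1 - θ))))⁻¹ / (2 * Real.pi), ?_⟩
  intro f hfc hfd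
  have hπ : (0:ℝ) < Real.pi := Real.pi_pos
  have he1 : (1:ℝ) < Real.exp 1 := by
    simpa using Real.exp_lt_exp.2 (by norm_num : (0:ℝ) < 1)
  have he1p : (0:ℝ) < Real.exp 1 := Real.exp_pos 1
  have hρ1 : (1:ℝ) < Real.exp θ := by
    simpa using Real.exp_lt_exp.2 hθ0
  have hρe : Real.exp θ < Real.exp 1 := Real.exp_lt_exp.2 hθ1
  have hρp : (0:ℝ) < Real.exp θ := Real.exp_pos θ
  set z₀ : ℂ := ((Real.exp θ : ℝ) : ℂ) with hz₀def
  have habs : ‖z₀‖ = Real.exp θ := by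
    rw [hz₀def, Complex.norm_real, Real.norm_eq_abs, _root_.abs_of_pos hρp]
  have hz₀ne : z₀ ≠ 0 := by
    intro h
    rw [h] at habs
    simp at habs
    linarith
  have hz0A : z₀ ∈ AnnInt := ⟨by rw [habs]; exact hρ1, by rw [habs]; exact hρe⟩
  have hsubAnn : AnnInt ⊆ Ann := fun z hz => ⟨hz.1.le, hz.2.le⟩
  have hAnn_nhds : Ann ∈ 𝓝 z₀ := mem_nhds_iff.2 ⟨AnnInt, hsubAnn, stmt10_annInt_open, hz0A⟩
  have hfd' : ∀ z ∈ AnnInt, DifferentiableAt ℂ f z := fun z hz =>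
    (hfd z hz).differentiableAt (stmt10_annInt_open.mem_nhds hz)
  -- spheres
  have habs_sph : ∀ (ρ : ℝ), 0 ≤ ρ → ∀ w ∈ Metric.sphere (0:ℂ) ρ, ‖w‖ = ρ := by
    intro ρ hρ w hw
    rw [mem_sphere_zero_iff_norm] at hw
    rw [hw]
  have hsph1 : Metric.sphere (0:ℂ) 1 ⊆ Ann := by
    intro w hw
    have := habs_sph 1 zero_le_one w hw
    exact ⟨this.ge, by rw [this]; exact he1.le⟩
  have hsphe : Metric.sphere (0:ℂ) (Real.exp 1) ⊆ Ann := by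
    intro w hw
    have := habs_sph _ he1p.le w hw
    exact ⟨by rw [this]; exact he1.le, this.le⟩
  have hne0 : ∀ (ρ:ℝ), 0 < ρ → ∀ w ∈ Metric.sphere (0:ℂ) ρ, w ≠ 0 := by
    intro ρ hρ w hw h0
    have := habs_sph ρ hρ.le w hw
    rw [h0] at this
    simp at this
    linarith
  have hnez : ∀ (ρ:ℝ), 0 ≤ ρ → ρ ≠ Real.exp θ → ∀ w ∈ Metric.sphere (0:ℂ) ρ, w ≠ z₀ := by
    intro ρ hρ hne w hw h
    exact hne (by rw [← habs_sph ρ hρ w hw, h, habs])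
  -- continuity packs
  have hcf_1 : ContinuousOn f (Metric.sphere (0:ℂ) 1) := hfc.mono hsph1
  have hcf_e : ContinuousOn f (Metric.sphere (0:ℂ) (Real.exp 1)) := hfc.mono hsphe
  have hinv_1 : ContinuousOn (fun w : ℂ => w⁻¹) (Metric.sphere (0:ℂ) 1) :=
    ContinuousOn.inv₀ continuousOn_id (hne0 1 one_pos)
  have hinv_e : ContinuousOn (fun w : ℂ => w⁻¹) (Metric.sphere (0:ℂ) (Real.exp 1)) :=
    ContinuousOn.inv₀ continuousOn_id (hne0 _ he1p)
  have hsubz_1 : ContinuousOn (fun w : ℂ => (w - z₀)⁻¹) (Metric.sphere (0:ℂ) 1) :=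
    ContinuousOn.inv₀ (continuousOn_id.sub continuousOn_const)
      (fun w hw => sub_ne_zero.2 (hnez 1 zero_le_one (by linarith) w hw))
  have hsubz_e : ContinuousOn (fun w : ℂ => (w - z₀)⁻¹) (Metric.sphere (0:ℂ) (Real.exp 1)) :=
    ContinuousOn.inv₀ (continuousOn_id.sub continuousOn_const)
      (fun w hw => sub_ne_zero.2 (hnez _ he1p.le (ne_of_gt hρe) w hw))
  -- integrals
  set I₀ := ∫ t in (0:ℝ)..(2*Real.pi), ‖f (circleMap 0 1 t)‖ with hI₀def
  set I₁ := ∫ t in (0:ℝ)..(2*Real.pi), ‖f (circleMap 0 (Real.exp 1) t)‖ with hI₁def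
  have hfcm : ∀ (ρ:ℝ), 0 ≤ ρ → Metric.sphere (0:ℂ) ρ ⊆ Ann →
      Continuous fun t : ℝ => f (circleMap 0 ρ t) := by
    intro ρ hρ hsub
    rw [← continuousOn_univ]
    exact hfc.comp (continuous_circleMap 0 ρ).continuousOn
      (fun t _ => hsub (circleMap_mem_sphere 0 hρ t))
  have hint1 : IntervalIntegrable (fun t => ‖f (circleMap 0 1 t)‖)
      volume 0 (2*Real.pi) :=
    (continuous_norm.comp (hfcm 1 zero_le_one hsph1)).intervalIntegrable _ _
  have hinte : IntervalIntegrable (fun t => ‖f (circleMap 0 (Real.exp 1) t)‖)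
      volume 0 (2*Real.pi) :=
    (continuous_norm.comp (hfcm _ he1p.le hsphe)).intervalIntegrable _ _
  have hI₀nn : 0 ≤ I₀ :=
    intervalIntegral.integral_nonneg (by positivity) (fun t _ => norm_nonneg _)
  have hI₁nn : 0 ≤ I₁ :=
    intervalIntegral.integral_nonneg (by positivity) (fun t _ => norm_nonneg _)
  have hGnn : 0 ≤ I₀ ^ (1-θ) * I₁ ^ θ := by positivity
  -- rewrite the goal integrals
  have hg0 : (∫ t in (0:ℝ)..(2*Real.pi), ‖f (Complex.exp (t * Complex.I))‖) = I₀ := by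
    rw [hI₀def]
    apply intervalIntegral.integral_congr
    intro t _
    have h : Complex.exp (t * Complex.I) = circleMap 0 1 t := by simp [circleMap]
    simp only [h]
  have hg1 : (∫ t in (0:ℝ)..(2*Real.pi),
      ‖f (Complex.exp (1 + t * Complex.I))‖) = I₁ := by
    rw [hI₁def]
    apply intervalIntegral.integral_congr
    intro t _
    have : Complex.exp (1 + t * Complex.I) = circleMap 0 (Real.exp 1) t := by
      rw [circleMap, Complex.ofReal_exp, ← Complex.exp_add]
      simp
    simp only [this]
  rw [hg0, hg1]
  -- circle integrability helper
  have hCI : ∀ (ρ:ℝ) (g : ℂ → ℂ), 0 ≤ ρ → ContinuousOn g (Metric.sphere (0:ℂ) ρ) →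
      CircleIntegrable g 0 ρ := fun ρ g hρ hg => hg.circleIntegrable hρ
  -- coefficients
  set cc : ℕ → ℂ := fun n => ∮ w in C(0, Real.exp 1), (w⁻¹)^(n+1) * f w with hccdef
  set dd : ℕ → ℂ := fun n => ∮ w in C(0, 1), w^n * f w with hdddef
  set A : ℕ → ℂ := fun N => ∮ w in C(0, Real.exp 1), (z₀ * w⁻¹)^N * ((w - z₀)⁻¹ * f w) with hAdef
  set B : ℕ → ℂ := fun N => ∮ w in C(0, 1), (w * z₀⁻¹)^N * ((w - z₀)⁻¹ * f w) with hBdef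
  have hne0Ann : ∀ w ∈ Ann, w ≠ 0 := by
    intro w hw h
    have := hw.1
    rw [h] at this
    simp at this
    linarith
  have hccIn : ∀ n : ℕ, cc n = ∮ w in C(0,1), (w⁻¹)^(n+1) * f w := by
    intro n
    simp only [hccdef]
    exact stmt10_circles_eq _ ∅ countable_empty
      (((ContinuousOn.inv₀ continuousOn_id hne0Ann).pow _).mul hfc)
      (fun z hz => ((differentiableAt_id.inv (hne0Ann z (hsubAnn hz.1))).pow _).mul
        (hfd' z hz.1))
  have hddOut : ∀ n : ℕ, dd n = ∮ w in C(0, Real.exp 1), w^n * f w := by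
    intro n
    simp only [hdddef]
    exact (stmt10_circles_eq _ ∅ countable_empty
      (((continuous_pow n).continuousOn).mul hfc)
      (fun z hz => (differentiableAt_id.pow _).mul (hfd' z hz.1))).symm
  -- Cauchy formula
  have hz₀ball : z₀ ∈ Metric.ball (0:ℂ) (Real.exp 1) := by
    rw [mem_ball_zero_iff, habs]; exact hρe
  have hint_e0 : (∮ w in C(0, Real.exp 1), (w - z₀)⁻¹) = 2*Real.pi*Complex.I :=
    circleIntegral.integral_sub_inv_of_mem_ball hz₀ball
  have hint_10 : (∮ w in C(0, 1), (w - z₀)⁻¹) = 0 := by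
    refine circleIntegral_eq_zero_of_differentiable_on_off_countable zero_le_one
      countable_empty ?_ ?_
    · refine ContinuousOn.inv₀ (continuousOn_id.sub continuousOn_const) ?_
      intro w hw
      refine sub_ne_zero.2 fun h => ?_
      have hle : ‖w‖ ≤ 1 := by
        rw [Metric.mem_closedBall, Complex.dist_eq, sub_zero] at hw
        exact hw
      rw [h, habs] at hle
      linarith
    · intro z hz
      refine (differentiableAt_id.sub_const _).inv (sub_ne_zero.2 fun h => ?_)
      have hlt : ‖z‖ < 1 := by
        have := hz.1
        rw [Metric.mem_ball, Complex.dist_eq, sub_zero] at this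
        exact this
      rw [h, habs] at hlt
      linarith
  set F := dslope f z₀ with hFdef
  have hFc : ContinuousOn F Ann := (continuousOn_dslope hAnn_nhds).2 ⟨hfc, hfd' z₀ hz0A⟩
  have hFd : ∀ z ∈ AnnInt \ {z₀}, DifferentiableAt ℂ F z := by
    intro z hz
    have hne : z ≠ z₀ := by simpa using hz.2
    exact (differentiableAt_dslope_of_ne hne).2 (hfd' z hz.1)
  have hFeq := stmt10_circles_eq F {z₀} (countable_singleton z₀) hFc hFd
  have hFval : ∀ (ρ:ℝ), 0 ≤ ρ → ρ ≠ Real.exp θ →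
      Set.EqOn F (fun w => (w - z₀)⁻¹ * f w - (w - z₀)⁻¹ * f z₀) (Metric.sphere (0:ℂ) ρ) := by
    intro ρ h0 hne w hw
    rw [hFdef, dslope_of_ne f (hnez ρ h0 hne w hw), slope_def_field]
    ring
  have hIcw_e : CircleIntegrable (fun w => (w - z₀)⁻¹ * f w) 0 (Real.exp 1) :=
    hCI _ _ he1p.le (hsubz_e.mul hcf_e)
  have hIcw_1 : CircleIntegrable (fun w => (w - z₀)⁻¹ * f w) 0 1 :=
    hCI _ _ zero_le_one (hsubz_1.mul hcf_1)
  have hIcz_e : CircleIntegrable (fun w => (w - z₀)⁻¹ * f z₀) 0 (Real.exp 1) :=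
    hCI _ _ he1p.le (hsubz_e.mul continuousOn_const)
  have hIcz_1 : CircleIntegrable (fun w => (w - z₀)⁻¹ * f z₀) 0 1 :=
    hCI _ _ zero_le_one (hsubz_1.mul continuousOn_const)
  have key_e : (∮ w in C(0, Real.exp 1), F w) =
      (∮ w in C(0, Real.exp 1), (w - z₀)⁻¹ * f w) - (2*Real.pi*Complex.I) * f z₀ := by
    rw [circleIntegral.integral_congr he1p.le (hFval _ he1p.le (ne_of_gt hρe))]
    rw [circleIntegral.integral_sub hIcw_e hIcz_e]
    congr 1
    calc (∮ w in C(0, Real.exp 1), (w - z₀)⁻¹ * f z₀)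
        = (∮ w in C(0, Real.exp 1), (w - z₀)⁻¹) • f z₀ :=
          circleIntegral.integral_smul_const _ _ _ _
      _ = (2*Real.pi*Complex.I) * f z₀ := by rw [hint_e0, smul_eq_mul]
  have key_1 : (∮ w in C(0, 1), F w) = (∮ w in C(0, 1), (w - z₀)⁻¹ * f w) := by
    rw [circleIntegral.integral_congr zero_le_one (hFval _ zero_le_one (by linarith))]
    rw [circleIntegral.integral_sub hIcw_1 hIcz_1]
    have : (∮ w in C(0, 1), (w - z₀)⁻¹ * f z₀) = 0 := by
      calc (∮ w in C(0, 1), (w - z₀)⁻¹ * f z₀)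
          = (∮ w in C(0, 1), (w - z₀)⁻¹) • f z₀ := circleIntegral.integral_smul_const _ _ _ _
        _ = 0 := by rw [hint_10, zero_smul]
    rw [this, sub_zero]
  have hCauchy : (2*Real.pi*Complex.I) * f z₀ =
      (∮ w in C(0, Real.exp 1), (w - z₀)⁻¹ * f w) - (∮ w in C(0,1), (w - z₀)⁻¹ * f w) := by
    rw [key_e, key_1] at hFeq
    linear_combination -hFeq
  -- integrability of expansion pieces
  have hIA : ∀ N:ℕ, CircleIntegrable (fun w => (z₀ * w⁻¹)^N * ((w - z₀)⁻¹ * f w)) 0 (Real.exp 1) :=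
    fun N => hCI _ _ he1p.le
      (((continuousOn_const.mul hinv_e).pow _).mul (hsubz_e.mul hcf_e))
  have hIB : ∀ N:ℕ, CircleIntegrable (fun w => (w * z₀⁻¹)^N * ((w - z₀)⁻¹ * f w)) 0 1 :=
    fun N => hCI _ _ zero_le_one
      (((continuousOn_id.mul continuousOn_const).pow _).mul (hsubz_1.mul hcf_1))
  have hIccm : ∀ n:ℕ, CircleIntegrable (fun w => z₀^n * ((w⁻¹)^(n+1) * f w)) 0 (Real.exp 1) :=
    fun n => hCI _ _ he1p.le (continuousOn_const.mul ((hinv_e.pow _).mul hcf_e))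
  have hIddm : ∀ n:ℕ, CircleIntegrable (fun w => (-(z₀⁻¹)^(n+1)) * (w^n * f w)) 0 1 :=
    fun n => hCI _ _ zero_le_one
      (continuousOn_const.mul (((continuous_pow n).continuousOn).mul hcf_1))
  -- expansion
  have hAstep : ∀ N:ℕ, A N = z₀^N * cc N + A (N+1) := by
    intro N
    simp only [hAdef, hccdef]
    rw [circleIntegral.integral_congr he1p.le (fun w hw =>
      stmt10_expandOut N w z₀ (f w) (hne0 _ he1p w hw) (hnez _ he1p.le (ne_of_gt hρe) w hw))]
    rw [stmt10_cint_add (hIccm N) (hIA (N+1)), circleIntegral.integral_const_mul]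
  have hBstep : ∀ N:ℕ, B N = (-(z₀⁻¹)^(N+1)) * dd N + B (N+1) := by
    intro N
    simp only [hBdef, hdddef]
    rw [circleIntegral.integral_congr zero_le_one (fun w hw =>
      stmt10_expandIn N w z₀ (f w) hz₀ne (hnez 1 zero_le_one (by linarith) w hw))]
    rw [stmt10_cint_add (hIddm N) (hIB (N+1)), circleIntegral.integral_const_mul]
  have hOuter : ∀ N:ℕ, (∮ w in C(0, Real.exp 1), (w - z₀)⁻¹ * f w) =
      (∑ n ∈ Finset.range N, z₀^n * cc n) + A N := by
    intro N
    induction N with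
    | zero =>
      simp only [Finset.sum_range_zero, zero_add, hAdef]
      exact circleIntegral.integral_congr he1p.le (fun w _ => by simp)
    | succ N ih =>
      rw [ih, hAstep N, Finset.sum_range_succ]
      ring
  have hInner : ∀ N:ℕ, (∮ w in C(0, 1), (w - z₀)⁻¹ * f w) =
      (∑ n ∈ Finset.range N, (-(z₀⁻¹)^(n+1)) * dd n) + B N := by
    intro N
    induction N with
    | zero =>
      simp only [Finset.sum_range_zero, zero_add, hBdef]
      exact circleIntegral.integral_congr zero_le_one (fun w _ => by simp)
    | succ N ih =>
      rw [ih, hBstep N, Finset.sum_range_succ]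
      ring
  have hRep : ∀ N:ℕ, (2*Real.pi*Complex.I) * f z₀ =
      ((∑ n ∈ Finset.range N, z₀^n * cc n) -
        (∑ n ∈ Finset.range N, (-(z₀⁻¹)^(n+1)) * dd n)) + (A N - B N) := by
    intro N
    rw [hCauchy, hOuter N, hInner N]
    ring
  -- coefficient bounds
  have hcc0 : ∀ n:ℕ, ‖cc n‖ ≤ I₀ := by
    intro n
    rw [hccIn n]
    refine le_trans (stmt10_norm_cint_le _ zero_le_one) ?_
    rw [one_mul, hI₀def]
    apply le_of_eq
    apply intervalIntegral.integral_congr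
    intro t _
    beta_reduce
    rw [norm_mul, norm_pow, norm_inv, norm_circleMap_zero]
    norm_num
  have hcc1 : ∀ n:ℕ, ‖cc n‖ ≤ Real.exp (-(n:ℝ)) * I₁ := by
    intro n
    simp only [hccdef]
    refine le_trans (stmt10_norm_cint_le _ he1p.le) ?_
    have heq : (∫ t in (0:ℝ)..(2*Real.pi),
        ‖((circleMap 0 (Real.exp 1) t)⁻¹)^(n+1) * f (circleMap 0 (Real.exp 1) t)‖)
        = (Real.exp 1)⁻¹^(n+1) * I₁ := by
      rw [hI₁def, ← intervalIntegral.integral_const_mul]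
      apply intervalIntegral.integral_congr
      intro t _
      beta_reduce
      rw [norm_mul, norm_pow, norm_inv, norm_circleMap_zero, _root_.abs_of_pos he1p]
    rw [heq]
    apply le_of_eq
    have hpow : Real.exp 1 * (Real.exp 1)⁻¹^(n+1) = Real.exp (-(n:ℝ)) := by
      rw [← Real.exp_neg, ← Real.exp_nat_mul, ← Real.exp_add]
      congr 1
      push_cast
      ring
    rw [← hpow]
    ring
  have hdd0 : ∀ n:ℕ, ‖dd n‖ ≤ I₀ := by
    intro n
    simp only [hdddef]
    refine le_trans (stmt10_norm_cint_le _ zero_le_one) ?_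
    rw [one_mul, hI₀def]
    apply le_of_eq
    apply intervalIntegral.integral_congr
    intro t _
    beta_reduce
    rw [norm_mul, norm_pow, norm_circleMap_zero]
    norm_num
  have hdd1 : ∀ n:ℕ, ‖dd n‖ ≤ Real.exp ((n:ℝ)+1) * I₁ := by
    intro n
    rw [hddOut n]
    refine le_trans (stmt10_norm_cint_le _ he1p.le) ?_
    have heq : (∫ t in (0:ℝ)..(2*Real.pi),
        ‖(circleMap 0 (Real.exp 1) t)^n * f (circleMap 0 (Real.exp 1) t)‖)
        = (Real.exp 1)^n * I₁ := by
      rw [hI₁def, ← intervalIntegral.integral_const_mul]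
      apply intervalIntegral.integral_congr
      intro t _
      beta_reduce
      rw [norm_mul, norm_pow, norm_circleMap_zero, _root_.abs_of_pos he1p]
    rw [heq]
    apply le_of_eq
    have hpow : Real.exp 1 * (Real.exp 1)^n = Real.exp ((n:ℝ)+1) := by
      rw [← Real.exp_nat_mul, ← Real.exp_add]
      congr 1
      push_cast
      ring
    rw [← hpow]
    ring
  -- per-term bounds
  have hterm1 : ∀ n : ℕ, ‖z₀^n * cc n‖ ≤ I₀^(1-θ) * I₁^θ *
      Real.exp (-(min θ (1-θ) * |(n:ℝ) - (Real.log I₁ - Real.log I₀)|)) := by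
    intro n
    rw [norm_mul, norm_pow, habs]
    have h1 : (Real.exp θ)^n = Real.exp (θ * n) := by
      rw [← Real.exp_nat_mul]
      ring_nf
    rw [h1]
    calc Real.exp (θ*(n:ℝ)) * ‖cc n‖
        ≤ Real.exp (θ*(n:ℝ)) * min I₀ (Real.exp (-(n:ℝ)) * I₁) :=
          mul_le_mul_of_nonneg_left (le_min (hcc0 n) (hcc1 n)) (Real.exp_pos _).le
      _ = min (Real.exp (θ*(n:ℝ)) * I₀) (Real.exp ((θ-1)*(n:ℝ)) * I₁) := by
          rw [mul_min_of_nonneg _ _ (Real.exp_pos _).le]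
          congr 1
          rw [← mul_assoc, ← Real.exp_add]
          have : θ*(n:ℝ) + -(n:ℝ) = (θ-1)*(n:ℝ) := by ring
          rw [this]
      _ ≤ _ := stmt10_minbound hθ0 hθ1 hI₀nn hI₁nn (n:ℝ)
  have hterm2 : ∀ n : ℕ, ‖(-(z₀⁻¹)^(n+1)) * dd n‖ ≤ I₀^(1-θ) * I₁^θ *
      Real.exp (-(min θ (1-θ) * |((n:ℝ)+1) - (-(Real.log I₁ - Real.log I₀))|)) := by
    intro n
    rw [norm_mul, norm_neg, norm_pow, norm_inv, habs]
    have h1 : ((Real.exp θ)⁻¹)^(n+1) = Real.exp (θ * (-((n:ℝ)+1))) := by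
      rw [← Real.exp_neg, ← Real.exp_nat_mul]
      congr 1
      push_cast
      ring
    rw [h1]
    calc Real.exp (θ*(-((n:ℝ)+1))) * ‖dd n‖
        ≤ Real.exp (θ*(-((n:ℝ)+1))) * min I₀ (Real.exp ((n:ℝ)+1) * I₁) :=
          mul_le_mul_of_nonneg_left (le_min (hdd0 n) (hdd1 n)) (Real.exp_pos _).le
      _ = min (Real.exp (θ*(-((n:ℝ)+1))) * I₀) (Real.exp ((θ-1)*(-((n:ℝ)+1))) * I₁) := by
          rw [mul_min_of_nonneg _ _ (Real.exp_pos _).le]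
          congr 1
          rw [← mul_assoc, ← Real.exp_add]
          have : θ*(-((n:ℝ)+1)) + ((n:ℝ)+1) = (θ-1)*(-((n:ℝ)+1)) := by ring
          rw [this]
      _ ≤ I₀^(1-θ) * I₁^θ *
          Real.exp (-(min θ (1-θ) * |(-((n:ℝ)+1)) - (Real.log I₁ - Real.log I₀)|)) :=
          stmt10_minbound hθ0 hθ1 hI₀nn hI₁nn (-((n:ℝ)+1))
      _ = _ := by
          have : (-((n:ℝ)+1)) - (Real.log I₁ - Real.log I₀)
              = -(((n:ℝ)+1) - (-(Real.log I₁ - Real.log I₀))) := by ring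
          rw [this, abs_neg]
  -- sum bounds
  have hsum1 : ∀ N:ℕ, ‖∑ n ∈ Finset.range N, z₀^n * cc n‖ ≤
      (I₀^(1-θ)*I₁^θ) * (2 * (1 - Real.exp (-(min θ (1-θ))))⁻¹) := by
    intro N
    refine le_trans (norm_sum_le _ _) ?_
    refine le_trans (Finset.sum_le_sum (fun n _ => hterm1 n)) ?_
    rw [← Finset.mul_sum]
    exact mul_le_mul_of_nonneg_left (stmt10_sum_exp_le _ _ hc N) hGnn
  have hsum2 : ∀ N:ℕ, ‖∑ n ∈ Finset.range N, (-(z₀⁻¹)^(n+1)) * dd n‖ ≤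
      (I₀^(1-θ)*I₁^θ) * (2 * (1 - Real.exp (-(min θ (1-θ))))⁻¹) := by
    intro N
    refine le_trans (norm_sum_le _ _) ?_
    refine le_trans (Finset.sum_le_sum (fun n _ => hterm2 n)) ?_
    rw [← Finset.mul_sum]
    refine mul_le_mul_of_nonneg_left ?_ hGnn
    set t' := -(Real.log I₁ - Real.log I₀) with ht'
    have hstep : (∑ n ∈ Finset.range N,
        Real.exp (-(min θ (1-θ) * |((n:ℝ)+1) - t'|))) ≤
        ∑ m ∈ Finset.range (N+1), Real.exp (-(min θ (1-θ) * |(m:ℝ) - t'|)) := by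
      rw [Finset.sum_range_succ' (fun m => Real.exp (-(min θ (1-θ) * |(m:ℝ) - t'|))) N]
      push_cast
      exact le_add_of_nonneg_right (Real.exp_pos _).le
    exact le_trans hstep (stmt10_sum_exp_le _ _ hc (N+1))
  -- remainder bounds
  have hAbnd : ∀ N:ℕ, ‖A N‖ ≤
      (Real.exp 1 * (Real.exp 1 - Real.exp θ)⁻¹ * I₁) * (Real.exp θ / Real.exp 1)^N := by
    intro N
    simp only [hAdef]
    refine le_trans (stmt10_norm_cint_le _ he1p.le) ?_
    have hmono : (∫ t in (0:ℝ)..(2*Real.pi), ‖(z₀ * (circleMap 0 (Real.exp 1) t)⁻¹)^N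
          * ((circleMap 0 (Real.exp 1) t - z₀)⁻¹ * f (circleMap 0 (Real.exp 1) t))‖) ≤
        (Real.exp θ / Real.exp 1)^N * (Real.exp 1 - Real.exp θ)⁻¹ * I₁ := by
      rw [hI₁def, ← intervalIntegral.integral_const_mul]
      apply intervalIntegral.integral_mono_on (by positivity)
      · have := (hIA N).norm
        simpa using this
      · exact hinte.const_mul _
      · intro t _
        rw [norm_mul, norm_pow, norm_mul, norm_mul, norm_inv, norm_inv, norm_circleMap_zero,
          _root_.abs_of_pos he1p, habs]
        have hd : Real.exp 1 - Real.exp θ ≤ ‖circleMap 0 (Real.exp 1) t - z₀‖ := by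
          have h1 : ‖circleMap 0 (Real.exp 1) t‖ - ‖z₀‖ ≤ ‖circleMap 0 (Real.exp 1) t - z₀‖ :=
            norm_sub_norm_le _ _
          rw [norm_circleMap_zero, _root_.abs_of_pos he1p, habs] at h1
          exact h1
        have hinv : (‖circleMap 0 (Real.exp 1) t - z₀‖)⁻¹ ≤
            (Real.exp 1 - Real.exp θ)⁻¹ := inv_anti₀ (by linarith) hd
        have hfnn : (0:ℝ) ≤ ‖f (circleMap 0 (Real.exp 1) t)‖ := norm_nonneg _
        calc (Real.exp θ * (Real.exp 1)⁻¹)^N *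
              ((‖circleMap 0 (Real.exp 1) t - z₀‖)⁻¹ *
                ‖f (circleMap 0 (Real.exp 1) t)‖)
            = ((Real.exp θ * (Real.exp 1)⁻¹)^N *
                (‖circleMap 0 (Real.exp 1) t - z₀‖)⁻¹) *
              ‖f (circleMap 0 (Real.exp 1) t)‖ := by ring
          _ ≤ ((Real.exp θ * (Real.exp 1)⁻¹)^N * (Real.exp 1 - Real.exp θ)⁻¹) *
              ‖f (circleMap 0 (Real.exp 1) t)‖ :=
              mul_le_mul_of_nonneg_right
                (mul_le_mul_of_nonneg_left hinv (by positivity)) hfnn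
          _ = (Real.exp θ / Real.exp 1)^N * (Real.exp 1 - Real.exp θ)⁻¹ *
              ‖f (circleMap 0 (Real.exp 1) t)‖ := by
              rw [div_eq_mul_inv]
    calc Real.exp 1 * ∫ t in (0:ℝ)..(2*Real.pi), ‖(z₀ * (circleMap 0 (Real.exp 1) t)⁻¹)^N
          * ((circleMap 0 (Real.exp 1) t - z₀)⁻¹ * f (circleMap 0 (Real.exp 1) t))‖
        ≤ Real.exp 1 * ((Real.exp θ / Real.exp 1)^N * (Real.exp 1 - Real.exp θ)⁻¹ * I₁) :=
          mul_le_mul_of_nonneg_left hmono he1p.le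
      _ = (Real.exp 1 * (Real.exp 1 - Real.exp θ)⁻¹ * I₁) * (Real.exp θ / Real.exp 1)^N := by
          ring
  have hBbnd : ∀ N:ℕ, ‖B N‖ ≤
      ((Real.exp θ - 1)⁻¹ * I₀) * ((Real.exp θ)⁻¹)^N := by
    intro N
    simp only [hBdef]
    refine le_trans (stmt10_norm_cint_le _ zero_le_one) ?_
    rw [one_mul]
    have hmono : (∫ t in (0:ℝ)..(2*Real.pi), ‖((circleMap 0 1 t) * z₀⁻¹)^N
          * ((circleMap 0 1 t - z₀)⁻¹ * f (circleMap 0 1 t))‖) ≤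
        ((Real.exp θ)⁻¹)^N * (Real.exp θ - 1)⁻¹ * I₀ := by
      rw [hI₀def, ← intervalIntegral.integral_const_mul]
      apply intervalIntegral.integral_mono_on (by positivity)
      · have := (hIB N).norm
        simpa using this
      · exact hint1.const_mul _
      · intro t _
        rw [norm_mul, norm_pow, norm_mul, norm_mul, norm_inv, norm_inv, norm_circleMap_zero, habs]
        have hd : Real.exp θ - 1 ≤ ‖circleMap 0 1 t - z₀‖ := by
          have h1 : ‖z₀‖ - ‖circleMap 0 1 t‖ ≤ ‖z₀ - circleMap 0 1 t‖ := norm_sub_norm_le _ _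
          rw [norm_sub_rev] at h1
          rw [norm_circleMap_zero, habs] at h1
          simpa using h1
        have hinv : (‖circleMap 0 1 t - z₀‖)⁻¹ ≤ (Real.exp θ - 1)⁻¹ :=
          inv_anti₀ (by linarith) hd
        have hfnn : (0:ℝ) ≤ ‖f (circleMap 0 1 t)‖ := norm_nonneg _
        calc (|1| * (Real.exp θ)⁻¹)^N *
              ((‖circleMap 0 1 t - z₀‖)⁻¹ * ‖f (circleMap 0 1 t)‖)
            = (((Real.exp θ)⁻¹)^N *
                (‖circleMap 0 1 t - z₀‖)⁻¹) * ‖f (circleMap 0 1 t)‖ := by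
              rw [abs_one]; ring
          _ ≤ (((Real.exp θ)⁻¹)^N * (Real.exp θ - 1)⁻¹) * ‖f (circleMap 0 1 t)‖ :=
              mul_le_mul_of_nonneg_right
                (mul_le_mul_of_nonneg_left hinv (by positivity)) hfnn
          _ = ((Real.exp θ)⁻¹)^N * (Real.exp θ - 1)⁻¹ * ‖f (circleMap 0 1 t)‖ := by
              ring
    calc (∫ t in (0:ℝ)..(2*Real.pi), ‖((circleMap 0 1 t) * z₀⁻¹)^N
          * ((circleMap 0 1 t - z₀)⁻¹ * f (circleMap 0 1 t))‖)
        ≤ ((Real.exp θ)⁻¹)^N * (Real.exp θ - 1)⁻¹ * I₀ := hmono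
      _ = ((Real.exp θ - 1)⁻¹ * I₀) * ((Real.exp θ)⁻¹)^N := by ring
  -- main estimate for each N
  have habs_sub : ∀ a b : ℂ, ‖a - b‖ ≤ ‖a‖ + ‖b‖ := by
    intro a b
    simpa [sub_eq_add_neg] using norm_add_le a (-b)
  have habs2π : ‖(2*Real.pi*Complex.I) * f z₀‖ = 2*Real.pi*‖f z₀‖ := by
    rw [norm_mul, norm_mul, norm_mul]
    simp [Complex.norm_I, Complex.norm_real, _root_.abs_of_pos hπ, Complex.norm_two]
  have hmain : ∀ N:ℕ, 2*Real.pi*‖f z₀‖ ≤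
      (I₀^(1-θ)*I₁^θ) * (4 * (1 - Real.exp (-(min θ (1-θ))))⁻¹) +
      ((Real.exp 1 * (Real.exp 1 - Real.exp θ)⁻¹ * I₁) * (Real.exp θ / Real.exp 1)^N +
       ((Real.exp θ - 1)⁻¹ * I₀) * ((Real.exp θ)⁻¹)^N) := by
    intro N
    calc 2*Real.pi*‖f z₀‖
        = ‖((∑ n ∈ Finset.range N, z₀^n * cc n) -
            (∑ n ∈ Finset.range N, (-(z₀⁻¹)^(n+1)) * dd n)) + (A N - B N)‖ := by
          rw [← habs2π, hRep N]
      _ ≤ ‖(∑ n ∈ Finset.range N, z₀^n * cc n) -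
            (∑ n ∈ Finset.range N, (-(z₀⁻¹)^(n+1)) * dd n)‖ + ‖A N - B N‖ :=
          norm_add_le _ _
      _ ≤ (‖∑ n ∈ Finset.range N, z₀^n * cc n‖ +
            ‖∑ n ∈ Finset.range N, (-(z₀⁻¹)^(n+1)) * dd n‖) +
          (‖A N‖ + ‖B N‖) :=
          add_le_add (habs_sub _ _) (habs_sub _ _)
      _ ≤ ((I₀^(1-θ)*I₁^θ) * (2 * (1 - Real.exp (-(min θ (1-θ))))⁻¹) +
            (I₀^(1-θ)*I₁^θ) * (2 * (1 - Real.exp (-(min θ (1-θ))))⁻¹)) +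
          ((Real.exp 1 * (Real.exp 1 - Real.exp θ)⁻¹ * I₁) * (Real.exp θ / Real.exp 1)^N +
           ((Real.exp θ - 1)⁻¹ * I₀) * ((Real.exp θ)⁻¹)^N) :=
          add_le_add (add_le_add (hsum1 N) (hsum2 N)) (add_le_add (hAbnd N) (hBbnd N))
      _ = _ := by ring
  -- pass to the limit
  have hq1 : Real.exp θ / Real.exp 1 < 1 := by
    rw [div_lt_one he1p]; exact hρe
  have hq2 : (Real.exp θ)⁻¹ < 1 := inv_lt_one_of_one_lt₀ hρ1
  have htend : Tendsto (fun N:ℕ =>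
      (I₀^(1-θ)*I₁^θ) * (4 * (1 - Real.exp (-(min θ (1-θ))))⁻¹) +
      ((Real.exp 1 * (Real.exp 1 - Real.exp θ)⁻¹ * I₁) * (Real.exp θ / Real.exp 1)^N +
       ((Real.exp θ - 1)⁻¹ * I₀) * ((Real.exp θ)⁻¹)^N)) atTop
      (𝓝 ((I₀^(1-θ)*I₁^θ) * (4 * (1 - Real.exp (-(min θ (1-θ))))⁻¹) +
        ((Real.exp 1 * (Real.exp 1 - Real.exp θ)⁻¹ * I₁) * 0 +
         ((Real.exp θ - 1)⁻¹ * I₀) * 0))) := by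
    apply Tendsto.const_add
    exact (((tendsto_pow_atTop_nhds_zero_of_lt_one (by positivity) hq1).const_mul _)).add
      (((tendsto_pow_atTop_nhds_zero_of_lt_one (by positivity) hq2).const_mul _))
  have hfin : 2*Real.pi*‖f z₀‖ ≤
      (I₀^(1-θ)*I₁^θ) * (4 * (1 - Real.exp (-(min θ (1-θ))))⁻¹) +
      ((Real.exp 1 * (Real.exp 1 - Real.exp θ)⁻¹ * I₁) * 0 +
       ((Real.exp θ - 1)⁻¹ * I₀) * 0) := ge_of_tendsto' htend hmain
  have h2π : (0:ℝ) < 2*Real.pi := by positivity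
  have hgoal : 4 * (1 - Real.exp (-(min θ (1 - θ))))⁻¹ / (2 * Real.pi) * I₀ ^ (1 - θ) * I₁ ^ θ
      = ((I₀^(1-θ)*I₁^θ) * (4 * (1 - Real.exp (-(min θ (1-θ))))⁻¹)) / (2*Real.pi) := by
    ring
  rw [hgoal, le_div_iff₀ h2π]
  nlinarith [hfin]
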